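/- As t → ∞, the solution U(t) = e^{tΩ}U₀ of the drag ODE converges to V_CM · (1, ε₁, ..., ε_N)ᵀ · ρ_g, i.e., all velocities converge to the center-of-mass velocity V_CM = (v_g + Σᵢ εᵢ v_{d,i})/(1 + Σᵢ εᵢ). Equivalently, in terms of U₀ = ρ_g(v_g, ε₁v_{d,1},...,ε_N v_{d,N}), the limit of e^{tΩ}U₀ is the projection of U₀ onto the kernel of Ω along the span of the other eigenvectors. -/

import Mathlib

open Matrix BigOperators Filter

lemma exp_mulVec_eigen {n : Type*} [Fintype n] [DecidableEq n]
    (A : Matrix n n ℝ) (v : n → ℝ) (μ : ℝ) (h : A *ᵥ v = μ • v) :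
    (NormedSpace.exp A) *ᵥ v = Real.exp μ • v := by
  letI : SeminormedRing (Matrix n n ℝ) := Matrix.linftyOpSemiNormedRing
  letI : NormedRing (Matrix n n ℝ) := Matrix.linftyOpNormedRing
  letI : NormedAlgebra ℝ (Matrix n n ℝ) := Matrix.linftyOpNormedAlgebra
  have hpow : ∀ k : ℕ, A ^ k *ᵥ v = μ ^ k • v := by
    intro k; induction k with
    | zero => simp [Matrix.one_mulVec]
    | succ k ih =>
        rw [pow_succ, ← Matrix.mulVec_mulVec, h, Matrix.mulVec_smul, ih, smul_smul, pow_succ]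
        ring_nf
  have hsum : Summable fun k : ℕ => ((Nat.factorial k : ℝ))⁻¹ • A ^ k :=
    NormedSpace.expSeries_summable' (𝕂 := ℝ) A
  let f : Matrix n n ℝ →ₗ[ℝ] (n → ℝ) :=
    { toFun := fun M => M *ᵥ v
      map_add' := fun M N => Matrix.add_mulVec M N v
      map_smul' := fun c M => Matrix.smul_mulVec c M v }
  have hmap : (NormedSpace.exp A) *ᵥ v
      = ∑' k : ℕ, f (((Nat.factorial k : ℝ))⁻¹ • A ^ k) := by
    rw [NormedSpace.exp_eq_tsum ℝ]
    exact (f.toContinuousLinearMap.map_tsum hsum)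
  rw [hmap]
  have : ∀ k : ℕ, f (((Nat.factorial k : ℝ))⁻¹ • A ^ k) = (((Nat.factorial k : ℝ))⁻¹ • μ ^ k) • v := by
    intro k
    simp only [f, LinearMap.coe_mk, AddHom.coe_mk, Matrix.smul_mulVec, hpow,
      smul_smul, smul_eq_mul]
  simp_rw [this]
  rw [Summable.tsum_smul_const (NormedSpace.expSeries_summable' (𝕂 := ℝ) μ)]
  congr 1
  rw [Real.exp_eq_exp_ℝ, NormedSpace.exp_eq_tsum ℝ]

lemma key_tendsto {n : Type*} [Fintype n] [DecidableEq n]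
    (S : Matrix n n ℝ) (hS : S.IsHermitian)
    (hneg : ∀ x : n → ℝ, x ⬝ᵥ (S *ᵥ x) ≤ 0)
    (w : n → ℝ) (hw : w ≠ 0) (hSw : S *ᵥ w = 0)
    (hker : ∀ x : n → ℝ, S *ᵥ x = 0 → ∃ c : ℝ, x = c • w)
    (x : n → ℝ) :
    Tendsto (fun t : ℝ => (NormedSpace.exp (t • S)) *ᵥ x) atTop
      (nhds (((w ⬝ᵥ x) / (w ⬝ᵥ w)) • w)) := by
  classical
  set V : n → (n → ℝ) := fun i => ⇑(hS.eigenvectorBasis i) with hV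
  set μ : n → ℝ := hS.eigenvalues with hμ
  have heig : ∀ i, S *ᵥ V i = μ i • V i := fun i => hS.mulVec_eigenvectorBasis i
  have hdot : ∀ i j, V i ⬝ᵥ V j = if i = j then 1 else 0 := by
    intro i j
    have h := orthonormal_iff_ite.mp hS.eigenvectorBasis.orthonormal i j
    show (hS.eigenvectorBasis i).ofLp ⬝ᵥ (hS.eigenvectorBasis j).ofLp = _
    rw [dotProduct_comm]
    simpa [EuclideanSpace.inner_eq_star_dotProduct] using h
  have hμle : ∀ i, μ i ≤ 0 := by
    intro i
    have h1 := hneg (V i)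
    rw [heig i, dotProduct_smul] at h1
    simpa [hdot i i] using h1
  -- expansion of any vector in the eigenbasis
  have hrepr : ∀ y : n → ℝ, y = ∑ i, (V i ⬝ᵥ y) • V i := by
    intro y
    have h := hS.eigenvectorBasis.sum_repr' (WithLp.toLp 2 y)
    have h3 := congrArg WithLp.ofLp h
    rw [WithLp.ofLp_sum] at h3
    simp only [WithLp.ofLp_smul, WithLp.ofLp_toLp] at h3
    have h2 : ∀ i, (inner ℝ (hS.eigenvectorBasis i) (WithLp.toLp 2 y) : ℝ)
        = V i ⬝ᵥ y := by
      intro i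
      rw [EuclideanSpace.inner_eq_star_dotProduct, dotProduct_comm]
      rfl
    simp only [h2] at h3
    exact h3.symm
  have hexp : ∀ (t : ℝ) (i : n),
      (NormedSpace.exp (t • S)) *ᵥ V i = Real.exp (t * μ i) • V i := by
    intro t i
    apply exp_mulVec_eigen
    rw [Matrix.smul_mulVec, heig i, smul_smul]
  have hform : ∀ t : ℝ, (NormedSpace.exp (t • S)) *ᵥ x
      = ∑ i, (Real.exp (t * μ i) * (V i ⬝ᵥ x)) • V i := by
    intro t
    calc (NormedSpace.exp (t • S)) *ᵥ x
        = ∑ i, (NormedSpace.exp (t • S)) *ᵥ ((V i ⬝ᵥ x) • V i) := by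
          conv_lhs => rw [hrepr x]
          simpa only [Matrix.mulVecLin_apply] using
            map_sum ((NormedSpace.exp (t • S)).mulVecLin)
              (fun i => (V i ⬝ᵥ x) • V i) Finset.univ
      _ = ∑ i, (Real.exp (t * μ i) * (V i ⬝ᵥ x)) • V i := by
          refine Finset.sum_congr rfl fun i _ => ?_
          rw [Matrix.mulVec_smul, hexp t i, smul_smul, mul_comm]
  have hlimit : Tendsto (fun t : ℝ => ∑ i, (Real.exp (t * μ i) * (V i ⬝ᵥ x)) • V i) atTop
      (nhds (∑ i, (if μ i = 0 then (V i ⬝ᵥ x) • V i else 0))) := by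
    apply tendsto_finset_sum
    intro i _
    by_cases h0 : μ i = 0
    · simp only [h0, mul_zero, Real.exp_zero, one_mul, if_pos]
      exact tendsto_const_nhds
    · have hlt : μ i < 0 := lt_of_le_of_ne (hμle i) h0
      rw [if_neg h0]
      have h1 : Tendsto (fun t : ℝ => t * μ i) atTop atBot :=
        tendsto_id.atTop_mul_const_of_neg hlt
      have h2 : Tendsto (fun t : ℝ => Real.exp (t * μ i) * (V i ⬝ᵥ x)) atTop (nhds 0) := by
        simpa using (Real.tendsto_exp_atBot.comp h1).mul_const (V i ⬝ᵥ x)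
      simpa using h2.smul_const (V i)
  have hsymmdot : ∀ u : n → ℝ, (S *ᵥ u) ⬝ᵥ w = 0 := by
    intro u
    have hTr : Sᵀ = S := by
      rw [← Matrix.conjTranspose_eq_transpose_of_trivial]; exact hS
    rw [dotProduct_comm, Matrix.dotProduct_mulVec, ← Matrix.mulVec_transpose, hTr,
      hSw, zero_dotProduct]
  have hVw : ∀ i, μ i ≠ 0 → V i ⬝ᵥ w = 0 := by
    intro i hne
    have h1 : (S *ᵥ V i) ⬝ᵥ w = 0 := hsymmdot (V i)
    rw [heig i, smul_dotProduct, smul_eq_mul] at h1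
    exact (mul_eq_zero.mp h1).resolve_left hne
  obtain ⟨i₀, hi₀0, hi₀w⟩ : ∃ i₀, μ i₀ = 0 ∧ V i₀ ⬝ᵥ w ≠ 0 := by
    by_contra hcon
    push_neg at hcon
    apply hw
    rw [hrepr w]
    refine Finset.sum_eq_zero fun i _ => ?_
    by_cases h0 : μ i = 0
    · rw [hcon i h0, zero_smul]
    · rw [hVw i h0, zero_smul]
  have hSVi₀ : S *ᵥ V i₀ = 0 := by rw [heig i₀, hi₀0, zero_smul]
  obtain ⟨c₀, hc₀⟩ := hker (V i₀) hSVi₀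
  have hd₀ : V i₀ ⬝ᵥ V i₀ = 1 := by simpa using hdot i₀ i₀
  have hunit : c₀ * c₀ * (w ⬝ᵥ w) = 1 := by
    have h1 := hd₀
    rw [hc₀, smul_dotProduct, dotProduct_smul, smul_eq_mul, smul_eq_mul] at h1
    linarith [h1]
  have hww : w ⬝ᵥ w ≠ 0 := by
    intro hz
    rw [hz, mul_zero] at hunit
    norm_num at hunit
  have huniq : ∀ j, μ j = 0 → j = i₀ := by
    intro j hj
    by_contra hne
    obtain ⟨c, hc⟩ := hker (V j) (by rw [heig j, hj, zero_smul])
    have h1 := hdot i₀ j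
    rw [if_neg fun h => hne h.symm, hc, dotProduct_smul, hc₀,
      smul_dotProduct, smul_eq_mul, smul_eq_mul] at h1
    have hc0 : c = 0 := by
      rcases mul_eq_zero.mp h1 with h | h
      · exact h
      · rcases mul_eq_zero.mp h with h' | h'
        · exact absurd h' (by rintro rfl; simp at hunit)
        · exact absurd h' hww
    have h2 := hdot j j
    rw [if_pos rfl, hc, hc0, zero_smul] at h2
    simp at h2
  have hsum_eq : (∑ i, (if μ i = 0 then (V i ⬝ᵥ x) • V i else 0))
      = ((w ⬝ᵥ x) / (w ⬝ᵥ w)) • w := by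
    rw [Finset.sum_eq_single i₀]
    · rw [if_pos hi₀0, hc₀, smul_dotProduct, smul_eq_mul, smul_smul]
      congr 1
      field_simp
      linear_combination (w ⬝ᵥ x) * hunit
    · intro j _ hj
      rw [if_neg fun h0 => hj (huniq j h0)]
    · intro h; exact absurd (Finset.mem_univ i₀) h
  rw [← hsum_eq]
  exact (tendsto_congr fun t => (hform t)).mpr hlimit

noncomputable def dragMatrix (N : ℕ) (ε α : Fin N → ℝ) :
    Matrix (Fin (N + 1)) (Fin (N + 1)) ℝ :=
  Matrix.of fun i j =>
    if hi : i = 0 then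
      if hj : j = 0 then -∑ k, ε k * α k
      else α (j.pred hj)
    else
      if hj : j = 0 then ε (i.pred hi) * α (i.pred hi)
      else if i = j then -α (i.pred hi) else 0

/-- As `t → ∞`, the solution `e^{tΩ}U₀` of the drag ODE converges to
`ρ_g · V_CM · (1, ε₁, ..., ε_N)ᵀ`, where `V_CM` is the centre-of-mass velocity. -/
theorem stmt_7 (N : ℕ) (hN : 1 ≤ N) (ε α : Fin N → ℝ)
    (hε : ∀ i, 0 < ε i) (hα : ∀ i, 0 < α i)
    (ρg : ℝ) (hρg : 0 < ρg) (vg : ℝ) (vd : Fin N → ℝ)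
    (U₀ : Fin (N + 1) → ℝ) (hU₀ : U₀ = ρg • (Fin.cons vg (fun i => ε i * vd i) : Fin (N + 1) → ℝ))
    (VCM : ℝ) (hVCM : VCM = (vg + ∑ i, ε i * vd i) / (1 + ∑ i, ε i))
    (L : Fin (N + 1) → ℝ) (hL : L = (ρg * VCM) • (Fin.cons 1 ε : Fin (N + 1) → ℝ)) :
    Tendsto (fun t : ℝ => (NormedSpace.exp (t • dragMatrix N ε α)).mulVec U₀)
      atTop (nhds L) := by
  classical
  set Ω := dragMatrix N ε α with hΩdef
  set s : Fin N → ℝ := fun k => Real.sqrt (ε k) with hs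
  have hs_pos : ∀ k, 0 < s k := fun k => Real.sqrt_pos.mpr (hε k)
  have hs_sq : ∀ k, s k * s k = ε k := fun k => Real.mul_self_sqrt (hε k).le
  set d : Fin (N + 1) → ℝ := Fin.cons 1 s with hd
  have hd0 : d 0 = 1 := rfl
  have hds : ∀ k, d k.succ = s k := fun k => by simp [hd]
  have hd_pos : ∀ i, 0 < d i := by
    intro i
    refine Fin.cases ?_ (fun k => ?_) i
    · norm_num [hd0]
    · rw [hds]; exact hs_pos k
  have hd_ne : ∀ i, d i ≠ 0 := fun i => (hd_pos i).ne'
  set D : Matrix (Fin (N + 1)) (Fin (N + 1)) ℝ := Matrix.diagonal d with hD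
  set Dinv : Matrix (Fin (N + 1)) (Fin (N + 1)) ℝ := Matrix.diagonal (fun i => (d i)⁻¹)
    with hDinv
  have hDD : D * Dinv = 1 := by
    rw [hD, hDinv, Matrix.diagonal_mul_diagonal]
    rw [show (fun i => d i * (d i)⁻¹) = fun _ => (1 : ℝ) from
      funext fun i => mul_inv_cancel₀ (hd_ne i)]
    exact Matrix.diagonal_one
  have hDinvD : Dinv * D = 1 := by
    rw [hD, hDinv, Matrix.diagonal_mul_diagonal]
    rw [show (fun i => (d i)⁻¹ * d i) = fun _ => (1 : ℝ) from
      funext fun i => inv_mul_cancel₀ (hd_ne i)]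
    exact Matrix.diagonal_one
  set T : Matrix (Fin (N + 1)) (Fin (N + 1)) ℝ :=
    Matrix.of (fun i j => (d i)⁻¹ * Ω i j * d j) with hT
  have hTapp : ∀ i j, T i j = (d i)⁻¹ * Ω i j * d j := fun i j => rfl
  have hconj : Ω = D * T * Dinv := by
    ext i j
    rw [Matrix.mul_diagonal, Matrix.diagonal_mul, hTapp,
      show d i * ((d i)⁻¹ * Ω i j * d j) * (d j)⁻¹
        = (d i * (d i)⁻¹) * (d j * (d j)⁻¹) * Ω i j from by ring,
      mul_inv_cancel₀ (hd_ne i), mul_inv_cancel₀ (hd_ne j)]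
    ring
  -- entries of T
  have hΩ00 : Ω 0 0 = -∑ k, ε k * α k := by simp [hΩdef, dragMatrix]
  have hΩ0s : ∀ k, Ω 0 k.succ = α k := fun k => by
    simp [hΩdef, dragMatrix, Fin.succ_ne_zero]
  have hΩs0 : ∀ k, Ω k.succ 0 = ε k * α k := fun k => by
    simp [hΩdef, dragMatrix, Fin.succ_ne_zero]
  have hΩss : ∀ k l, Ω k.succ l.succ = if k = l then -α k else 0 := fun k l => by
    by_cases hkl : k = l
    · subst hkl; simp [hΩdef, dragMatrix, Fin.succ_ne_zero]
    · simp [hΩdef, dragMatrix, Fin.succ_ne_zero, hkl,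
        fun h => hkl (Fin.succ_injective _ h)]
  have hT00 : T 0 0 = -∑ k, ε k * α k := by
    rw [hTapp, hΩ00, hd0]; norm_num
  have hT0s : ∀ k, T 0 k.succ = α k * s k := fun k => by
    rw [hTapp, hΩ0s, hd0, hds]; norm_num
  have hTs0 : ∀ k, T k.succ 0 = s k * α k := fun k => by
    rw [hTapp, hΩs0, hd0, hds, ← hs_sq k, mul_one,
      show (s k)⁻¹ * (s k * s k * α k) = (s k)⁻¹ * s k * (s k * α k) from by ring,
      inv_mul_cancel₀ (hs_pos k).ne', one_mul]
  have hTss : ∀ k l, T k.succ l.succ = if k = l then -α k else 0 := fun k l => by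
    rw [hTapp, hΩss, hds, hds]
    by_cases hkl : k = l
    · subst hkl
      rw [if_pos rfl,
        show (s k)⁻¹ * -α k * s k = (s k)⁻¹ * s k * -α k from by ring,
        inv_mul_cancel₀ (hs_pos k).ne', one_mul]
    · rw [if_neg hkl]; ring
  -- Hermitian
  have hTherm : T.IsHermitian := by
    show Tᴴ = T
    rw [Matrix.conjTranspose_eq_transpose_of_trivial]
    ext i j
    rw [Matrix.transpose_apply]
    refine Fin.cases ?_ (fun k => ?_) i <;>
      [skip; skip] <;> refine Fin.cases ?_ (fun l => ?_) j
    · rfl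
    · rw [hT0s, hTs0]; ring
    · rw [hT0s, hTs0]; ring
    · rw [hTss, hTss]
      by_cases hkl : k = l
      · subst hkl; simp
      · rw [if_neg hkl, if_neg (fun h => hkl h.symm)]
  -- the kernel vector
  set w : Fin (N + 1) → ℝ := Fin.cons 1 s with hwdef
  have hw0 : w 0 = 1 := rfl
  have hws : ∀ k, w k.succ = s k := fun k => by simp [hwdef]
  have hwne : w ≠ 0 := fun h => by
    have := congrFun h 0
    rw [hw0] at this
    norm_num at this
  -- mulVec formulas
  have hTmv0 : ∀ x : Fin (N + 1) → ℝ,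
      (T *ᵥ x) 0 = (-∑ k, ε k * α k) * x 0 + ∑ k, α k * s k * x k.succ := by
    intro x
    show (T 0) ⬝ᵥ x = _
    rw [dotProduct, Fin.sum_univ_succ, hT00]
    congr 1
    refine Finset.sum_congr rfl fun k _ => ?_
    rw [hT0s]
  have hTmvs : ∀ (x : Fin (N + 1) → ℝ) (k : Fin N),
      (T *ᵥ x) k.succ = s k * α k * x 0 - α k * x k.succ := by
    intro x k
    show (T k.succ) ⬝ᵥ x = _
    rw [dotProduct, Fin.sum_univ_succ, hTs0]
    have : ∀ l, T k.succ l.succ * x l.succ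
        = if k = l then -α k * x l.succ else 0 := by
      intro l
      rw [hTss]
      by_cases hkl : k = l
      · rw [if_pos hkl, if_pos hkl]
      · rw [if_neg hkl, if_neg hkl, zero_mul]
    rw [Finset.sum_congr rfl fun l _ => this l, Finset.sum_ite_eq]
    simp
    ring
  have hTw : T *ᵥ w = 0 := by
    funext i
    refine Fin.cases ?_ (fun k => ?_) i
    · rw [hTmv0, hw0, mul_one]
      have : ∀ k, α k * s k * w k.succ = ε k * α k := fun k => by
        rw [hws, mul_assoc, hs_sq k]; ring
      simp only [this]
      simp
    · rw [hTmvs, hw0, hws]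
      simp
      ring
  -- the quadratic form
  have hquad : ∀ x : Fin (N + 1) → ℝ,
      x ⬝ᵥ (T *ᵥ x) = -∑ k, α k * (s k * x 0 - x k.succ) ^ 2 := by
    intro x
    rw [dotProduct, Fin.sum_univ_succ, hTmv0]
    have hterm : ∀ k : Fin N, x k.succ * (T *ᵥ x) k.succ
        = x k.succ * (s k * α k * x 0 - α k * x k.succ) := fun k => by rw [hTmvs x k]
    simp only [hterm]
    rw [mul_add, Finset.mul_sum,
      show x 0 * ((-∑ k, ε k * α k) * x 0) = ∑ k, -(ε k * α k * (x 0 * x 0)) from by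
        rw [Finset.sum_neg_distrib, show x 0 * ((-∑ k, ε k * α k) * x 0)
          = -((∑ k, ε k * α k) * (x 0 * x 0)) from by ring, Finset.sum_mul],
      ← Finset.sum_neg_distrib (f := fun k => α k * (s k * x 0 - x k.succ) ^ 2),
      ← Finset.sum_add_distrib, ← Finset.sum_add_distrib]
    refine Finset.sum_congr rfl fun k _ => ?_
    linear_combination (α k * x 0 * x 0) * hs_sq k
  -- negativity
  have hnegT : ∀ x : Fin (N + 1) → ℝ, x ⬝ᵥ (T *ᵥ x) ≤ 0 := by
    intro x
    rw [hquad x]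
    have h1 : (0:ℝ) ≤ ∑ k, α k * (s k * x 0 - x k.succ) ^ 2 :=
      Finset.sum_nonneg fun k _ => mul_nonneg (hα k).le (sq_nonneg _)
    linarith
  -- kernel
  have hkerT : ∀ x : Fin (N + 1) → ℝ, T *ᵥ x = 0 → ∃ c : ℝ, x = c • w := by
    intro x hx
    have h1 : x ⬝ᵥ (T *ᵥ x) = 0 := by rw [hx, dotProduct_zero]
    rw [hquad x] at h1
    have h2 : ∑ k, α k * (s k * x 0 - x k.succ) ^ 2 = 0 := by linarith
    have h3 : ∀ k, α k * (s k * x 0 - x k.succ) ^ 2 = 0 := fun k =>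
      (Finset.sum_eq_zero_iff_of_nonneg
        (fun k _ => mul_nonneg (hα k).le (sq_nonneg _))).mp h2 k
        (Finset.mem_univ k)
    refine ⟨x 0, ?_⟩
    funext i
    refine Fin.cases ?_ (fun k => ?_) i
    · simp [hw0]
    · have hk := h3 k
      have hz : s k * x 0 - x k.succ = 0 := by
        rcases mul_eq_zero.mp hk with h | h
        · exact absurd h (hα k).ne'
        · exact pow_eq_zero_iff two_ne_zero |>.mp h
      have : x k.succ = s k * x 0 := by linarith
      simp [this, hws, mul_comm]
  -- conjugation of the exponential
  let Du : (Matrix (Fin (N + 1)) (Fin (N + 1)) ℝ)ˣ := ⟨D, Dinv, hDD, hDinvD⟩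
  have hexpconj : ∀ t : ℝ,
      NormedSpace.exp (t • Ω) = D * NormedSpace.exp (t • T) * Dinv := by
    intro t
    have h1 : t • Ω = D * (t • T) * Dinv := by
      rw [hconj, Matrix.mul_smul, Matrix.smul_mul]
    rw [h1]
    exact Matrix.exp_units_conj Du (t • T)
  have hform : ∀ t : ℝ, NormedSpace.exp (t • Ω) *ᵥ U₀
      = D *ᵥ (NormedSpace.exp (t • T) *ᵥ (Dinv *ᵥ U₀)) := by
    intro t
    rw [hexpconj t, ← Matrix.mulVec_mulVec, ← Matrix.mulVec_mulVec]
  -- the spectral limit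
  have hkey := key_tendsto T hTherm hnegT w hwne hTw hkerT (Dinv *ᵥ U₀)
  have hcont : Continuous fun y : Fin (N + 1) → ℝ => D *ᵥ y := by
    have : (fun y : Fin (N + 1) → ℝ => D *ᵥ y) = ⇑(Matrix.mulVecLin D) := by
      funext y; rw [Matrix.mulVecLin_apply]
    rw [this]
    exact (Matrix.mulVecLin D).continuous_of_finiteDimensional
  have h2 : Tendsto (fun t : ℝ => D *ᵥ (NormedSpace.exp (t • T) *ᵥ (Dinv *ᵥ U₀))) atTop
      (nhds (D *ᵥ (((w ⬝ᵥ (Dinv *ᵥ U₀)) / (w ⬝ᵥ w)) • w))) :=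
    ((hcont.tendsto _).comp hkey)
  -- compute the limit value
  have hU0 : U₀ 0 = ρg * vg := by rw [hU₀]; simp
  have hUs : ∀ k, U₀ k.succ = ρg * (ε k * vd k) := fun k => by rw [hU₀]; simp
  have hDinvU : ∀ i, (Dinv *ᵥ U₀) i = (d i)⁻¹ * U₀ i := by
    intro i
    show (Dinv i) ⬝ᵥ U₀ = _
    rw [hDinv]
    simp [Matrix.diagonal, dotProduct, Finset.sum_ite_eq, ite_mul]
  have hwdot : w ⬝ᵥ (Dinv *ᵥ U₀) = ρg * (vg + ∑ k, ε k * vd k) := by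
    rw [dotProduct, Fin.sum_univ_succ]
    simp only [hDinvU]
    rw [hw0, hd0, hU0]
    have : ∀ k : Fin N, w k.succ * ((d k.succ)⁻¹ * U₀ k.succ) = ρg * (ε k * vd k) := by
      intro k
      rw [hws, hds, hUs, show s k * ((s k)⁻¹ * (ρg * (ε k * vd k)))
        = s k * (s k)⁻¹ * (ρg * (ε k * vd k)) from by ring,
        mul_inv_cancel₀ (hs_pos k).ne', one_mul]
    simp only [this]
    rw [mul_add, Finset.mul_sum]
    norm_num
  have hww2 : w ⬝ᵥ w = 1 + ∑ k, ε k := by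
    rw [dotProduct, Fin.sum_univ_succ, hw0]
    have : ∀ k : Fin N, w k.succ * w k.succ = ε k := fun k => by rw [hws, hs_sq]
    simp only [this]
    norm_num
  have hDw : D *ᵥ w = (Fin.cons 1 ε : Fin (N + 1) → ℝ) := by
    funext i
    have hDi : (D *ᵥ w) i = d i * w i := by
      show (D i) ⬝ᵥ w = _
      rw [hD]
      simp [Matrix.diagonal, dotProduct, Finset.sum_ite_eq, ite_mul]
    rw [hDi]
    refine Fin.cases ?_ (fun k => ?_) i
    · rw [hd0, hw0, Fin.cons_zero]; norm_num
    · rw [hds, hws, hs_sq, Fin.cons_succ]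
  have hval : D *ᵥ (((w ⬝ᵥ (Dinv *ᵥ U₀)) / (w ⬝ᵥ w)) • w) = L := by
    rw [Matrix.mulVec_smul, hDw, hL, hwdot, hww2, hVCM, mul_div_assoc]
  rw [hval] at h2
  exact (tendsto_congr hform).mpr h2
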